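/- arXiv:2106.12262 — 3 statements merged into one kernel-verified Lean document; each statement's English description precedes it below -/
import Mathlib

section
/- Fix real numbers rho in (0,1) and alpha >= 0, and set c := 1 + alpha^2 + rho^2. Define g : (-1,1) -> R by g(lambda) = -(c - rho lambda) / ( 2 (1 - lambda^2) ). Then g attains its maximum over (-1,1) at the unique point lambda*(alpha, rho) := ( alpha^2 + rho^2 + 1 - sqrt( (alpha^2 + rho^2 + rho + 1)(alpha^2 + rho^2 - rho + 1) ) ) / rho, and moreover lambda*(alpha, rho) lies in the open interval (0, 1). -/
set_option maxHeartbeats 1000000 in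
/-- The λ-dependent part of the limit variational criterion
`g(λ) = -(1 + α² + ρ² - ρλ) / (2(1 - λ²))` attains its maximum over `(-1, 1)`
at the unique point
`λ*(α,ρ) = (α² + ρ² + 1 - √((α² + ρ² + ρ + 1)(α² + ρ² - ρ + 1)))/ρ`,
which moreover lies in `(0, 1)`. -/
theorem profiled_variational_parameter_unique_max
    (ρ α : ℝ) (hρ : ρ ∈ Set.Ioo (0 : ℝ) 1) (hα : 0 ≤ α) :
    (α ^ 2 + ρ ^ 2 + 1 -
        Real.sqrt ((α ^ 2 + ρ ^ 2 + ρ + 1) * (α ^ 2 + ρ ^ 2 - ρ + 1))) / ρ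
      ∈ Set.Ioo (0 : ℝ) 1 ∧
    ∀ l ∈ Set.Ioo (-1 : ℝ) 1,
      l ≠ (α ^ 2 + ρ ^ 2 + 1 -
            Real.sqrt ((α ^ 2 + ρ ^ 2 + ρ + 1) * (α ^ 2 + ρ ^ 2 - ρ + 1))) / ρ →
      -((1 + α ^ 2 + ρ ^ 2) - ρ * l) / (2 * (1 - l ^ 2)) <
        -((1 + α ^ 2 + ρ ^ 2) -
            ρ * ((α ^ 2 + ρ ^ 2 + 1 -
              Real.sqrt ((α ^ 2 + ρ ^ 2 + ρ + 1) * (α ^ 2 + ρ ^ 2 - ρ + 1))) / ρ)) /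
          (2 * (1 - ((α ^ 2 + ρ ^ 2 + 1 -
              Real.sqrt ((α ^ 2 + ρ ^ 2 + ρ + 1) * (α ^ 2 + ρ ^ 2 - ρ + 1))) / ρ) ^ 2)) := by
  obtain ⟨hρ0, hρ1⟩ := hρ
  set s : ℝ := Real.sqrt ((α ^ 2 + ρ ^ 2 + ρ + 1) * (α ^ 2 + ρ ^ 2 - ρ + 1)) with hsdef
  set c : ℝ := α ^ 2 + ρ ^ 2 + 1 with hc
  have hcρ : ρ < c := by nlinarith [sq_nonneg α, sq_nonneg (ρ - 1)]
  have hc0 : (0 : ℝ) ≤ c := by linarith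
  have hs0 : 0 ≤ s := Real.sqrt_nonneg _
  have hs2 : s ^ 2 = c ^ 2 - ρ ^ 2 := by
    rw [hsdef, sq, Real.mul_self_sqrt (by nlinarith)]
    rw [hc]; ring
  have hslt : s < c := by
    refine lt_of_pow_lt_pow_left₀ 2 hc0 ?_
    nlinarith
  have hsgt : c - ρ < s := by
    refine lt_of_pow_lt_pow_left₀ 2 hs0 ?_
    nlinarith
  have hspos : 0 < s := by linarith
  have hcs : 0 < c - s := by linarith
  set lam : ℝ := (c - s) / ρ with hlam
  have hρlam : ρ * lam = c - s := by
    rw [hlam]; field_simp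
  have hlam0 : 0 < lam := div_pos hcs hρ0
  have hlam1 : lam < 1 := (div_lt_one hρ0).mpr (by linarith)
  refine ⟨⟨hlam0, hlam1⟩, ?_⟩
  intro l hl hne
  obtain ⟨hl1, hl2⟩ := hl
  have h1l : 0 < 1 - l ^ 2 := by nlinarith
  have h1lam : 0 < 1 - lam ^ 2 := by nlinarith
  have hgoalc : (1 : ℝ) + α ^ 2 + ρ ^ 2 = c := by rw [hc]; ring
  rw [hgoalc]
  have hlamsq : ρ ^ 2 * lam ^ 2 = (c - s) ^ 2 := by
    rw [← mul_pow, hρlam]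
  have hglam : -(c - ρ * lam) / (2 * (1 - lam ^ 2)) = -(ρ ^ 2) / (4 * (c - s)) := by
    rw [div_eq_div_iff (by linarith) (by linarith)]
    linear_combination 4 * (c - s) * hρlam - 2 * hlamsq + 2 * hs2
  rw [hglam, div_lt_div_iff₀ (by linarith) (by linarith)]
  have hne' : ρ * l - (c - s) ≠ 0 := by
    intro h
    apply hne
    rw [hlam, eq_div_iff hρ0.ne']
    linarith [h]
  have hkey : 0 < (ρ * l - (c - s)) ^ 2 := by positivity
  nlinarith [hkey, hs2]
end

section
/- The function h : (0,1) -> R defined by h(rho) = (1/2) * sqrt( rho^4 + rho^2 + 1 ) / ( ( (1 + rho^2 - sqrt( rho^4 + rho^2 + 1 ))^2 / rho^2 ) - 1 ) is strictly decreasing on (0,1). -/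
private lemma h_eq (ρ : ℝ) (h0 : 0 < ρ) :
    (1 / 2) * Real.sqrt (ρ ^ 4 + ρ ^ 2 + 1) /
      ((1 + ρ ^ 2 - Real.sqrt (ρ ^ 4 + ρ ^ 2 + 1)) ^ 2 / ρ ^ 2 - 1)
    = -(1 + ρ ^ 2 + Real.sqrt (ρ ^ 4 + ρ ^ 2 + 1)) / 4 := by
  set s := Real.sqrt (ρ ^ 4 + ρ ^ 2 + 1) with hs_def
  have hpos : (0:ℝ) < ρ ^ 4 + ρ ^ 2 + 1 := by positivity
  have hs2 : s ^ 2 = ρ ^ 4 + ρ ^ 2 + 1 := Real.sq_sqrt hpos.le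
  have hsp : 0 < s := Real.sqrt_pos.mpr hpos
  have hlt : s < 1 + ρ ^ 2 := by
    have h1 : ρ ^ 4 + ρ ^ 2 + 1 < (1 + ρ ^ 2) ^ 2 := by nlinarith
    calc s < Real.sqrt ((1 + ρ ^ 2) ^ 2) := Real.sqrt_lt_sqrt hpos.le h1
      _ = 1 + ρ ^ 2 := Real.sqrt_sq (by positivity)
  have hden : (1 + ρ ^ 2 - s) ^ 2 / ρ ^ 2 - 1 = 2 * s * (s - 1 - ρ ^ 2) / ρ ^ 2 := by
    field_simp
    nlinarith [hs2]
  have hdne : (1 + ρ ^ 2 - s) ^ 2 / ρ ^ 2 - 1 ≠ 0 := by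
    rw [hden]
    have hneg : 2 * s * (s - 1 - ρ ^ 2) < 0 := by nlinarith
    exact div_ne_zero (ne_of_lt hneg) (by positivity)
  rw [div_eq_iff hdne, hden]
  field_simp
  nlinarith [hs2]

/-- The concentrated variational objective at `α = 0`,
`h(ρ) = (1/2) √(ρ⁴ + ρ² + 1) / ((1 + ρ² - √(ρ⁴ + ρ² + 1))²/ρ² - 1)`,
is strictly decreasing on `(0, 1)`. -/
theorem concentrated_objective_alpha_zero_strictAnti :
    StrictAntiOn
      (fun ρ : ℝ =>
        (1 / 2) * Real.sqrt (ρ ^ 4 + ρ ^ 2 + 1) /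
          ((1 + ρ ^ 2 - Real.sqrt (ρ ^ 4 + ρ ^ 2 + 1)) ^ 2 / ρ ^ 2 - 1))
      (Set.Ioo (0 : ℝ) 1) := by
  intro x hx y hy hxy
  simp only
  rw [h_eq x hx.1, h_eq y (hx.1.trans hxy)]
  have hsq : x ^ 2 < y ^ 2 := by nlinarith [hx.1]
  have hsqrt : Real.sqrt (x ^ 4 + x ^ 2 + 1) < Real.sqrt (y ^ 4 + y ^ 2 + 1) :=
    Real.sqrt_lt_sqrt (by positivity) (by nlinarith [hx.1])
  linarith
end

section
/- For every real number rho in (0,1), 0 < ( (1 + rho^2 - sqrt( rho^4 + rho^2 + 1 )) / rho )^2 < (2 - sqrt(3))^2. Equivalently, the quantity ( (1 + rho^2 - sqrt( rho^4 + rho^2 + 1 ))^2 / rho^2 ) - 1 is strictly greater than -1 and strictly less than (2 - sqrt(3))^2 - 1 for all rho in (0,1). -/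
/-- Bounds on the squared profiled variational parameter at `α = 0`: for every
`ρ ∈ (0,1)`, `0 < ((1 + ρ² - √(ρ⁴ + ρ² + 1))/ρ)² < (2 - √3)²`; equivalently,
`((1 + ρ² - √(ρ⁴ + ρ² + 1))²/ρ²) - 1` lies strictly between `-1` and
`(2 - √3)² - 1`. -/
theorem profiled_parameter_squared_bounds :
    ∀ ρ ∈ Set.Ioo (0 : ℝ) 1,
      (0 < ((1 + ρ ^ 2 - Real.sqrt (ρ ^ 4 + ρ ^ 2 + 1)) / ρ) ^ 2 ∧
        ((1 + ρ ^ 2 - Real.sqrt (ρ ^ 4 + ρ ^ 2 + 1)) / ρ) ^ 2 <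
          (2 - Real.sqrt 3) ^ 2) ∧
      (-1 < (1 + ρ ^ 2 - Real.sqrt (ρ ^ 4 + ρ ^ 2 + 1)) ^ 2 / ρ ^ 2 - 1 ∧
        (1 + ρ ^ 2 - Real.sqrt (ρ ^ 4 + ρ ^ 2 + 1)) ^ 2 / ρ ^ 2 - 1 <
          (2 - Real.sqrt 3) ^ 2 - 1) := by
  rintro ρ ⟨hρ0, hρ1⟩
  set s := Real.sqrt (ρ ^ 4 + ρ ^ 2 + 1) with hs
  have hnn : (0:ℝ) ≤ ρ ^ 4 + ρ ^ 2 + 1 := by positivity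
  have hs2 : s ^ 2 = ρ ^ 4 + ρ ^ 2 + 1 := Real.sq_sqrt hnn
  have hs0 : 0 ≤ s := Real.sqrt_nonneg _
  have h3 : Real.sqrt 3 ^ 2 = 3 := Real.sq_sqrt (by norm_num)
  have h3lt : Real.sqrt 3 < 2 := by
    nlinarith [Real.sqrt_nonneg 3, h3]
  have h3gt : 1 < Real.sqrt 3 := by
    nlinarith [Real.sqrt_nonneg 3, h3]
  -- numerator positive
  have hnum : 0 < 1 + ρ ^ 2 - s := by
    have : s < 1 + ρ ^ 2 := by
      rw [hs, show (1:ℝ) + ρ ^ 2 = Real.sqrt ((1 + ρ ^ 2) ^ 2) from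
        (Real.sqrt_sq (by positivity)).symm]
      apply Real.sqrt_lt_sqrt hnn
      nlinarith
    linarith
  have hc : 0 < 2 - Real.sqrt 3 := by linarith
  -- key upper bound on numerator
  have hkey : 1 + ρ ^ 2 - s < (2 - Real.sqrt 3) * ρ := by
    have hlt : 1 + ρ ^ 2 - (2 - Real.sqrt 3) * ρ < s := by
      rw [hs]
      have h1 : (1 + ρ ^ 2 - (2 - Real.sqrt 3) * ρ) ^ 2 < ρ ^ 4 + ρ ^ 2 + 1 := by
        have hpos : 0 < (2 - Real.sqrt 3) * ρ * (1 - ρ) ^ 2 := by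
          apply mul_pos (mul_pos hc hρ0); nlinarith
        nlinarith [h3, hpos, sq_nonneg ρ]
      calc 1 + ρ ^ 2 - (2 - Real.sqrt 3) * ρ
          = Real.sqrt ((1 + ρ ^ 2 - (2 - Real.sqrt 3) * ρ) ^ 2) := by
            rw [Real.sqrt_sq (by nlinarith)]
        _ < Real.sqrt (ρ ^ 4 + ρ ^ 2 + 1) := Real.sqrt_lt_sqrt (by positivity) h1
    linarith
  have hq : 0 < (1 + ρ ^ 2 - s) / ρ := div_pos hnum hρ0
  have hq2 : (1 + ρ ^ 2 - s) / ρ < 2 - Real.sqrt 3 := by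
    rw [div_lt_iff₀ hρ0]; linarith
  have hA : 0 < ((1 + ρ ^ 2 - s) / ρ) ^ 2 := by positivity
  have hB : ((1 + ρ ^ 2 - s) / ρ) ^ 2 < (2 - Real.sqrt 3) ^ 2 :=
    pow_lt_pow_left₀ hq2 (le_of_lt hq) two_ne_zero
  have hdiv : (1 + ρ ^ 2 - s) ^ 2 / ρ ^ 2 = ((1 + ρ ^ 2 - s) / ρ) ^ 2 := by
    rw [div_pow]
  exact ⟨⟨hA, hB⟩, by rw [hdiv]; constructor <;> linarith⟩
end
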